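/- Let (A, B, C) be a recollement of abelian categories in which A, B and C all have enough projectives and enough injectives and both i^* and i^! are exact, let n ≥ 1, let (T1, F1) and (T2, F2) be n-cotorsion pairs in A and C respectively, and let (T, F) be the glued pair in B. Then T^∨_{n-1} = {B ∈ B : i^*(B) ∈ (T1)^∨_{n-1} and j^*(B) ∈ (T2)^∨_{n-1}} and F^∧_{n-1} = {B ∈ B : i^!(B) ∈ (F1)^∧_{n-1} and j^*(B) ∈ (F2)^∧_{n-1}}. -/
import Mathlib


open CategoryTheory CategoryTheory.Limits CategoryTheory.Abelian ZeroObject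

universe v u

namespace PaperRecollement

/-- The `k`-th Ext group of two objects in an abelian category,
as a type (it carries an `AddCommGroup` structure). -/
noncomputable def ExtGrp {D : Type u} [Category.{v} D] [Abelian D] (X Y : D) (k : ℕ) :
    Type (max u v) :=
  letI : HasDerivedCategory.{max u v} D := HasDerivedCategory.standard D
  letI : HasExt.{max u v} D := hasExt_of_hasDerivedCategory D
  Abelian.Ext X Y k

noncomputable instance {D : Type u} [Category.{v} D] [Abelian D] (X Y : D) (k : ℕ) :
    AddCommGroup (ExtGrp X Y k) :=
  letI : HasDerivedCategory.{max u v} D := HasDerivedCategory.standard D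
  letI : HasExt.{max u v} D := hasExt_of_hasDerivedCategory D
  inferInstanceAs (AddCommGroup (Abelian.Ext X Y k))

/-- `Ext^k(X, Y) = 0`. -/
def ExtVanish {D : Type u} [Category.{v} D] [Abelian D] (X Y : D) (k : ℕ) : Prop :=
  Subsingleton (ExtGrp X Y k)

/-- A functor between abelian categories is exact if it is additive and preserves
short exact sequences. -/
structure IsExactFunctor {A : Type u} {B : Type u} [Category.{v} A] [Category.{v} B]
    [Abelian A] [Abelian B] (F : A ⥤ B) : Prop where
  additive : F.Additive
  preserves_shortExact : ∀ ⦃X Y Z : A⦄ (f : X ⟶ Y) (g : Y ⟶ Z) (w : f ≫ g = 0)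
    (w' : F.map f ≫ F.map g = 0),
    (ShortComplex.mk f g w).ShortExact → (ShortComplex.mk (F.map f) (F.map g) w').ShortExact

/-- A recollement of abelian categories. -/
structure Recollement (A B C : Type u) [Category.{v} A] [Category.{v} B] [Category.{v} C]
    [Abelian A] [Abelian B] [Abelian C] where
  /-- `i_* : A ⥤ B` -/
  iStar : A ⥤ B
  /-- `i^* : B ⥤ A` -/
  iUStar : B ⥤ A
  /-- `i^! : B ⥤ A` -/
  iShriek : B ⥤ A
  /-- `j^* : B ⥤ C` -/
  jUStar : B ⥤ C
  /-- `j_! : C ⥤ B` -/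
  jShriek : C ⥤ B
  /-- `j_* : C ⥤ B` -/
  jStar : C ⥤ B
  adj₁ : iUStar ⊣ iStar
  adj₂ : iStar ⊣ iShriek
  adj₃ : jShriek ⊣ jUStar
  adj₄ : jUStar ⊣ jStar
  iUStar_additive : iUStar.Additive
  iShriek_additive : iShriek.Additive
  jShriek_additive : jShriek.Additive
  jStar_additive : jStar.Additive
  iStar_full : iStar.Full
  iStar_faithful : iStar.Faithful
  jShriek_full : jShriek.Full
  jShriek_faithful : jShriek.Faithful
  jStar_full : jStar.Full
  jStar_faithful : jStar.Faithful
  iStar_exact : IsExactFunctor iStar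
  jUStar_exact : IsExactFunctor jUStar
  essIm_iStar_eq_ker_jUStar : ∀ X : B,
    (∃ Y : A, Nonempty (iStar.obj Y ≅ X)) ↔ Nonempty (jUStar.obj X ≅ 0)

variable {D : Type u} [Category.{v} D] [Abelian D]

/-- `Z^∧_m` : objects with a `Z`-resolution of length `m`. -/
def ResClass (Z : Set D) : ℕ → Set D
  | 0 => {C | ∃ Z₀ ∈ Z, Nonempty (Z₀ ≅ C)}
  | (m + 1) => {C | ∃ (K X : D) (f : K ⟶ X) (g : X ⟶ C) (w : f ≫ g = 0),
      (ShortComplex.mk f g w).ShortExact ∧ X ∈ Z ∧ K ∈ ResClass Z m}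

/-- `Z^∨_m` : objects with a `Z`-coresolution of length `m`. -/
def CoresClass (Z : Set D) : ℕ → Set D
  | 0 => {C | ∃ Z₀ ∈ Z, Nonempty (C ≅ Z₀)}
  | (m + 1) => {C | ∃ (X K : D) (f : C ⟶ X) (g : X ⟶ K) (w : f ≫ g = 0),
      (ShortComplex.mk f g w).ShortExact ∧ X ∈ Z ∧ K ∈ CoresClass Z m}

/-- Left `n`-cotorsion pair. -/
structure IsLeftNCotorsionPair (n : ℕ) (𝒳 𝒴 : Set D) : Prop where
  closed_summands : ∀ ⦃X X' : D⦄, X ∈ 𝒳 →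
    (∃ (s : X' ⟶ X) (r : X ⟶ X'), s ≫ r = 𝟙 X') → X' ∈ 𝒳
  ext_vanish : ∀ ⦃X Y : D⦄, X ∈ 𝒳 → Y ∈ 𝒴 → ∀ k, 1 ≤ k → k ≤ n → ExtVanish X Y k
  exists_ses : ∀ C : D, ∃ (K X : D) (f : K ⟶ X) (g : X ⟶ C) (w : f ≫ g = 0),
    (ShortComplex.mk f g w).ShortExact ∧ X ∈ 𝒳 ∧ K ∈ ResClass 𝒴 (n - 1)

/-- Right `n`-cotorsion pair. -/
structure IsRightNCotorsionPair (n : ℕ) (𝒳 𝒴 : Set D) : Prop where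
  closed_summands : ∀ ⦃Y Y' : D⦄, Y ∈ 𝒴 →
    (∃ (s : Y' ⟶ Y) (r : Y ⟶ Y'), s ≫ r = 𝟙 Y') → Y' ∈ 𝒴
  ext_vanish : ∀ ⦃X Y : D⦄, X ∈ 𝒳 → Y ∈ 𝒴 → ∀ k, 1 ≤ k → k ≤ n → ExtVanish X Y k
  exists_ses : ∀ C : D, ∃ (Y Z : D) (f : C ⟶ Y) (g : Y ⟶ Z) (w : f ≫ g = 0),
    (ShortComplex.mk f g w).ShortExact ∧ Y ∈ 𝒴 ∧ Z ∈ CoresClass 𝒳 (n - 1)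

/-- `n`-cotorsion pair. -/
def IsNCotorsionPair (n : ℕ) (𝒳 𝒴 : Set D) : Prop :=
  IsLeftNCotorsionPair n 𝒳 𝒴 ∧ IsRightNCotorsionPair n 𝒳 𝒴

/-- Hereditary `n`-cotorsion pair. -/
def IsHereditaryNCotorsionPair (n : ℕ) (𝒳 𝒴 : Set D) : Prop :=
  IsNCotorsionPair n 𝒳 𝒴 ∧ ∀ ⦃X Y : D⦄, X ∈ 𝒳 → Y ∈ 𝒴 → ExtVanish X Y (n + 1)

/-- The image class of a class of objects under a functor: objects isomorphic to
`F.obj X` for some `X ∈ S`. -/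
def imgClass {A B : Type u} [Category.{v} A] [Category.{v} B] (F : A ⥤ B) (S : Set A) :
    Set B :=
  {Y | ∃ X ∈ S, Nonempty (F.obj X ≅ Y)}

/-- A pseudo cluster tilting subcategory of an abelian category, given as a class of
objects: a full additive iso-closed subcategory admitting the two approximation
short exact sequences. -/
structure IsPseudoClusterTilting (T : Set D) : Prop where
  iso_closed : ∀ ⦃X Y : D⦄, X ∈ T → Nonempty (X ≅ Y) → Y ∈ T
  zero_mem : (0 : D) ∈ T
  biprod_mem : ∀ ⦃X Y : D⦄, X ∈ T → Y ∈ T → (X ⊞ Y) ∈ T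
  left_approx : ∀ C : D, ∃ (T₁ T₂ : D) (f : C ⟶ T₁) (g : T₁ ⟶ T₂) (w : f ≫ g = 0),
    (ShortComplex.mk f g w).ShortExact ∧ T₁ ∈ T ∧ T₂ ∈ T ∧
      ∀ T' ∈ T, ∀ h : C ⟶ T', ∃ k : T₁ ⟶ T', f ≫ k = h
  right_approx : ∀ C : D, ∃ (T₃ T₄ : D) (f : T₃ ⟶ T₄) (g : T₄ ⟶ C) (w : f ≫ g = 0),
    (ShortComplex.mk f g w).ShortExact ∧ T₃ ∈ T ∧ T₄ ∈ T ∧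
      ∀ T' ∈ T, ∀ h : T' ⟶ C, ∃ k : T' ⟶ T₄, k ≫ g = h


section AbelianHelpers


lemma shortExact_of_epi {X Y : D} (f : X ⟶ Y) [Epi f] :
    (ShortComplex.mk (kernel.ι f) f (kernel.condition f)).ShortExact where
  exact := ShortComplex.exact_of_f_is_kernel _ (kernelIsKernel f)

lemma shortExact_of_mono {X Y : D} (f : X ⟶ Y) [Mono f] :
    (ShortComplex.mk f (cokernel.π f) (cokernel.condition f)).ShortExact where
  exact := ShortComplex.exact_of_g_is_cokernel _ (cokernelIsCokernel f)

lemma shortExact_biprod_inl_snd (X Y : D) :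
    (ShortComplex.mk (biprod.inl : X ⟶ X ⊞ Y) biprod.snd (by simp)).ShortExact := by
  refine ShortComplex.Splitting.shortExact ⟨biprod.fst, biprod.inr, by simp, by simp, ?_⟩
  simpa using biprod.total

lemma shortExact_biprod_inr_fst (X Y : D) :
    (ShortComplex.mk (biprod.inr : Y ⟶ X ⊞ Y) biprod.fst (by simp)).ShortExact := by
  refine ShortComplex.Splitting.shortExact ⟨biprod.snd, biprod.inl, by simp, by simp, ?_⟩
  rw [add_comm]; simpa using biprod.total

/-- comparison of cokernels. -/
lemma coker_compare {P Q Q' Rr R' : D} {p : P ⟶ Q} {q : Q ⟶ Rr} {p' : P ⟶ Q'} {q' : Q' ⟶ R'}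
    {w : p ≫ q = 0} {w' : p' ≫ q' = 0}
    (h1 : (ShortComplex.mk p q w).ShortExact) (h2 : (ShortComplex.mk p' q' w').ShortExact)
    (β : Q ≅ Q') (hβ : p ≫ β.hom = p') : Nonempty (Rr ≅ R') := by
  haveI := h1.epi_g
  haveI := h2.epi_g
  have e1 : p ≫ (β.hom ≫ q') = 0 := by rw [← Category.assoc, hβ, w']
  have e2 : p' ≫ (β.inv ≫ q) = 0 := by
    rw [← hβ]; simp [w]
  let d1 : Rr ⟶ R' := h1.exact.desc (β.hom ≫ q') e1
  let d2 : R' ⟶ Rr := h2.exact.desc (β.inv ≫ q) e2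
  have hd1 : q ≫ d1 = β.hom ≫ q' := h1.exact.g_desc _ _
  have hd2 : q' ≫ d2 = β.inv ≫ q := h2.exact.g_desc _ _
  refine ⟨⟨d1, d2, ?_, ?_⟩⟩
  · rw [← cancel_epi q, ← Category.assoc, hd1, Category.assoc, hd2]
    simp
  · rw [← cancel_epi q', ← Category.assoc, hd2, Category.assoc, hd1]
    simp

/-- comparison of kernels. -/
lemma ker_compare {Y W X K F : D} {k : Y ⟶ W} {h : W ⟶ X} {f : K ⟶ F} {g : F ⟶ X}
    {w : k ≫ h = 0} {w' : f ≫ g = 0}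
    (h1 : (ShortComplex.mk k h w).ShortExact) (h2 : (ShortComplex.mk f g w').ShortExact)
    (β : F ≅ W) (hβ : β.hom ≫ h = g) : Nonempty (Y ≅ K) := by
  haveI := h1.mono_f
  haveI := h2.mono_f
  have e1 : (k ≫ β.inv) ≫ g = 0 := by rw [← hβ]; simp [w]
  have e2 : (f ≫ β.hom) ≫ h = 0 := by rw [Category.assoc, hβ, w']
  let d1 : Y ⟶ K := h2.exact.lift (k ≫ β.inv) e1
  let d2 : K ⟶ Y := h1.exact.lift (f ≫ β.hom) e2
  have hd1 : d1 ≫ f = k ≫ β.inv := h2.exact.lift_f _ _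
  have hd2 : d2 ≫ k = f ≫ β.hom := h1.exact.lift_f _ _
  refine ⟨⟨d1, d2, ?_, ?_⟩⟩
  · rw [← cancel_mono k, Category.assoc, hd2, ← Category.assoc, hd1]
    simp
  · rw [← cancel_mono f, Category.assoc, hd1, ← Category.assoc, hd2]
    simp

end AbelianHelpers

section FunctorHelpers

variable {A : Type u} {B : Type u} [Category.{v} A] [Category.{v} B] [Abelian A] [Abelian B]

lemma IsExactFunctor.map_shortExact {F : A ⥤ B} (hF : IsExactFunctor F)
    {X Y Z : A} {f : X ⟶ Y} {g : Y ⟶ Z} {w : f ≫ g = 0}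
    (h : (ShortComplex.mk f g w).ShortExact) :
    (ShortComplex.mk (F.map f) (F.map g)
      (by haveI := hF.additive; rw [← F.map_comp, w]; exact F.map_zero _ _)).ShortExact :=
  hF.preserves_shortExact f g w _ h

lemma IsExactFunctor.map_epi {F : A ⥤ B} (hF : IsExactFunctor F)
    {X Y : A} (f : X ⟶ Y) [Epi f] : Epi (F.map f) :=
  (hF.map_shortExact (shortExact_of_epi f)).epi_g

lemma IsExactFunctor.map_mono {F : A ⥤ B} (hF : IsExactFunctor F)
    {X Y : A} (f : X ⟶ Y) [Mono f] : Mono (F.map f) :=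
  (hF.map_shortExact (shortExact_of_mono f)).mono_f

end FunctorHelpers

namespace Recollement

variable {A B C : Type u} [Category.{v} A] [Category.{v} B] [Category.{v} C]
  [Abelian A] [Abelian B] [Abelian C] (R : Recollement A B C)

lemma isZero_jUStar_iStar (X : A) : IsZero (R.jUStar.obj (R.iStar.obj X)) := by
  obtain ⟨e⟩ := (R.essIm_iStar_eq_ker_jUStar (R.iStar.obj X)).1 ⟨X, ⟨Iso.refl _⟩⟩
  exact IsZero.of_iso (isZero_zero C) e

lemma exists_iStar_preimage {M : B} (h : IsZero (R.jUStar.obj M)) :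
    ∃ A₀ : A, Nonempty (R.iStar.obj A₀ ≅ M) :=
  (R.essIm_iStar_eq_ker_jUStar M).2 ⟨h.isoZero⟩

lemma hom_iStar_jStar_eq {A₀ : A} {U : C} (f g : R.iStar.obj A₀ ⟶ R.jStar.obj U) : f = g := by
  have hf := (R.adj₄.homEquiv _ _).apply_symm_apply f
  have hg := (R.adj₄.homEquiv _ _).apply_symm_apply g
  rw [← hf, ← hg]
  congr 1
  exact (R.isZero_jUStar_iStar A₀).eq_of_src _ _

lemma hom_jShriek_iStar_eq {U : C} {A₀ : A} (f g : R.jShriek.obj U ⟶ R.iStar.obj A₀) : f = g := by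
  have hf := (R.adj₃.homEquiv _ _).symm_apply_apply f
  have hg := (R.adj₃.homEquiv _ _).symm_apply_apply g
  rw [← hf, ← hg]
  congr 1
  exact (R.isZero_jUStar_iStar A₀).eq_of_tgt _ _

lemma isZero_iShriek_jStar (U : C) : IsZero (R.iShriek.obj (R.jStar.obj U)) := by
  rw [IsZero.iff_id_eq_zero]
  apply (R.adj₂.homEquiv _ _).symm.injective
  exact R.hom_iStar_jStar_eq _ _

lemma isZero_iUStar_jShriek (U : C) : IsZero (R.iUStar.obj (R.jShriek.obj U)) := by
  rw [IsZero.iff_id_eq_zero]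
  apply (R.adj₁.homEquiv _ _).injective
  exact R.hom_jShriek_iStar_eq _ _

lemma isZero_of_isZero_iUStar_jUStar {M : B} (hi : IsZero (R.iUStar.obj M))
    (hj : IsZero (R.jUStar.obj M)) : IsZero M := by
  haveI := R.iStar_full
  haveI := R.iStar_faithful
  haveI := R.iStar_exact.additive
  obtain ⟨A₀, ⟨e⟩⟩ := R.exists_iStar_preimage hj
  have h1 : IsZero (R.iUStar.obj (R.iStar.obj A₀)) := hi.of_iso (R.iUStar.mapIso e)
  have h2 : IsZero A₀ := h1.of_iso (asIso (R.adj₁.counit.app A₀)).symm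
  exact (R.iStar.map_isZero h2).of_iso e.symm

lemma isZero_of_isZero_iShriek_jUStar {M : B} (hi : IsZero (R.iShriek.obj M))
    (hj : IsZero (R.jUStar.obj M)) : IsZero M := by
  haveI := R.iStar_full
  haveI := R.iStar_faithful
  haveI := R.iStar_exact.additive
  obtain ⟨A₀, ⟨e⟩⟩ := R.exists_iStar_preimage hj
  have h1 : IsZero (R.iShriek.obj (R.iStar.obj A₀)) := hi.of_iso (R.iShriek.mapIso e)
  haveI : IsIso R.adj₂.unit := R.adj₂.unit_isIso_of_L_fully_faithful
  have h2 : IsZero A₀ := h1.of_iso (asIso (R.adj₂.unit.app A₀))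
  exact (R.iStar.map_isZero h2).of_iso e.symm

lemma epi_adj₁_unit_app (X : B) : Epi (R.adj₁.unit.app X) := by
  haveI := R.iStar_full
  haveI := R.iStar_faithful
  haveI := R.iStar_exact.additive
  set η := R.adj₁.unit.app X with hη
  have hzc : IsZero (R.jUStar.obj (cokernel η)) := by
    haveI : Epi (R.jUStar.map (cokernel.π η)) := R.jUStar_exact.map_epi _
    exact IsZero.of_epi_eq_zero (R.jUStar.map (cokernel.π η))
      ((R.isZero_jUStar_iStar (R.iUStar.obj X)).eq_of_src _ _)
  obtain ⟨A₀, ⟨e⟩⟩ := R.exists_iStar_preimage hzc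
  obtain ⟨qbar, hqbar⟩ := R.iStar.map_surjective (cokernel.π η ≫ e.inv)
  have h0 : η ≫ R.iStar.map qbar = 0 := by
    rw [hqbar, ← Category.assoc, cokernel.condition, zero_comp]
  have hq0 : qbar = 0 := by
    apply (R.adj₁.homEquiv X A₀).injective
    rw [Adjunction.homEquiv_unit, Adjunction.homEquiv_unit]
    simpa using h0
  have : cokernel.π η = 0 := by
    have : cokernel.π η ≫ e.inv = 0 := by rw [← hqbar, hq0, Functor.map_zero]
    calc cokernel.π η = (cokernel.π η ≫ e.inv) ≫ e.hom := by simp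
    _ = 0 := by rw [this, zero_comp]
  exact Preadditive.epi_of_cokernel_zero this

lemma mono_adj₂_counit_app (X : B) : Mono (R.adj₂.counit.app X) := by
  haveI := R.iStar_full
  haveI := R.iStar_faithful
  haveI := R.iStar_exact.additive
  set ε := R.adj₂.counit.app X with hε
  have hzk : IsZero (R.jUStar.obj (kernel ε)) := by
    haveI : Mono (R.jUStar.map (kernel.ι ε)) := R.jUStar_exact.map_mono _
    exact IsZero.of_mono_eq_zero (R.jUStar.map (kernel.ι ε))
      ((R.isZero_jUStar_iStar (R.iShriek.obj X)).eq_of_tgt _ _)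
  obtain ⟨A₀, ⟨e⟩⟩ := R.exists_iStar_preimage hzk
  obtain ⟨kbar, hkbar⟩ := R.iStar.map_surjective (e.hom ≫ kernel.ι ε)
  have h0 : R.iStar.map kbar ≫ ε = 0 := by
    rw [hkbar, Category.assoc, kernel.condition, comp_zero]
  have hk0 : kbar = 0 := by
    apply (R.adj₂.homEquiv A₀ X).symm.injective
    rw [Adjunction.homEquiv_counit, Adjunction.homEquiv_counit]
    simpa using h0
  have : kernel.ι ε = 0 := by
    have : e.hom ≫ kernel.ι ε = 0 := by rw [← hkbar, hk0, Functor.map_zero]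
    calc kernel.ι ε = e.inv ≫ (e.hom ≫ kernel.ι ε) := by simp
    _ = 0 := by rw [this, comp_zero]
  exact Preadditive.mono_of_kernel_zero this

end Recollement

section Classes

lemma shortExact_precomp_iso {P P' Q Rr : D} {f : P ⟶ Q} {g : Q ⟶ Rr} {w : f ≫ g = 0}
    (se : (ShortComplex.mk f g w).ShortExact) (e : P' ≅ P) :
    (ShortComplex.mk (e.hom ≫ f) g (by rw [Category.assoc, w, comp_zero])).ShortExact :=
  ShortComplex.shortExact_of_iso
    (ShortComplex.isoMk e.symm (Iso.refl Q) (Iso.refl Rr) (by simp) (by simp) :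
      ShortComplex.mk f g w ≅ _) se

lemma shortExact_postcomp_iso {P Q Rr R' : D} {f : P ⟶ Q} {g : Q ⟶ Rr} {w : f ≫ g = 0}
    (se : (ShortComplex.mk f g w).ShortExact) (e : Rr ≅ R') :
    (ShortComplex.mk f (g ≫ e.hom) (by rw [← Category.assoc, w, zero_comp])).ShortExact :=
  ShortComplex.shortExact_of_iso
    (ShortComplex.isoMk (Iso.refl P) (Iso.refl Q) e (by simp) (by simp) :
      ShortComplex.mk f g w ≅ _) se

lemma coresClass_iso {Z : Set D} :
    ∀ {m : ℕ} {P P' : D}, P ∈ CoresClass Z m → (P ≅ P') → P' ∈ CoresClass Z m := by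
  intro m
  induction m with
  | zero =>
    rintro P P' ⟨Z₀, hZ₀, ⟨e₀⟩⟩ e
    exact ⟨Z₀, hZ₀, ⟨e.symm ≪≫ e₀⟩⟩
  | succ m ih =>
    rintro P P' ⟨X₀, K, f, g, w, se, hX₀, hK⟩ e
    exact ⟨X₀, K, e.symm.hom ≫ f, g, _, shortExact_precomp_iso se e.symm, hX₀, hK⟩

lemma resClass_iso {Z : Set D} :
    ∀ {m : ℕ} {P P' : D}, P ∈ ResClass Z m → (P ≅ P') → P' ∈ ResClass Z m := by
  intro m
  induction m with
  | zero =>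
    rintro P P' ⟨Z₀, hZ₀, ⟨e₀⟩⟩ e
    exact ⟨Z₀, hZ₀, ⟨e₀ ≪≫ e⟩⟩
  | succ m ih =>
    rintro P P' ⟨K, X₀, f, g, w, se, hX₀, hK⟩ e
    exact ⟨K, X₀, f, g ≫ e.hom, _, shortExact_postcomp_iso se e, hX₀, hK⟩

end Classes

section Glue

variable {A B C : Type u} [Category.{v} A] [Category.{v} B] [Category.{v} C]
  [Abelian A] [Abelian B] [Abelian C]

set_option maxHeartbeats 1000000 in
lemma glue_step_cores (R : Recollement A B C)
    (hiU : IsExactFunctor R.iUStar) (hiS : IsExactFunctor R.iShriek)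
    {X : B} {S_A C₁ : A} {U C₂ : C}
    {f₁ : R.iUStar.obj X ⟶ S_A} {g₁ : S_A ⟶ C₁} {w₁ : f₁ ≫ g₁ = 0}
    (se₁ : (ShortComplex.mk f₁ g₁ w₁).ShortExact)
    {a' : R.jUStar.obj X ⟶ U} {g₂ : U ⟶ C₂} {w₂ : a' ≫ g₂ = 0}
    (se₂ : (ShortComplex.mk a' g₂ w₂).ShortExact) :
    ∃ (V Y : B) (f : X ⟶ V) (g : V ⟶ Y) (w : f ≫ g = 0),
      (ShortComplex.mk f g w).ShortExact ∧
      Nonempty (R.iUStar.obj V ≅ S_A) ∧ Nonempty (R.jUStar.obj V ≅ U) ∧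
      Nonempty (R.iUStar.obj Y ≅ C₁) ∧ Nonempty (R.jUStar.obj Y ≅ C₂) := by
  haveI := R.iStar_full
  haveI := R.iStar_faithful
  haveI := R.jStar_full
  haveI := R.jStar_faithful
  haveI := hiU.additive
  haveI := hiS.additive
  haveI := R.jUStar_exact.additive
  haveI := R.iStar_exact.additive
  haveI := R.jStar_additive
  haveI := se₁.mono_f
  haveI := se₂.mono_f
  -- notation
  set η : X ⟶ R.iStar.obj (R.iUStar.obj X) := R.adj₁.unit.app X with hηdef
  haveI hηepi : Epi η := R.epi_adj₁_unit_app X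
  set JU : B := R.jStar.obj U with hJUdef
  set η' : JU ⟶ R.iStar.obj (R.iUStar.obj JU) := R.adj₁.unit.app JU with hη'def
  haveI hη'epi : Epi η' := R.epi_adj₁_unit_app JU
  set u : X ⟶ JU := (R.adj₄.homEquiv X U) a' with hudef
  have hu_eps : R.jUStar.map u ≫ R.adj₄.counit.app U = a' := by
    have h := R.adj₄.homEquiv_counit (X := X) (Y := U) (g := u)
    rw [← h, hudef, Equiv.symm_apply_apply]
  -- the kernel piece over U
  set Vj : B := kernel η' with hVjdef
  set κ : Vj ⟶ JU := kernel.ι η' with hκdef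
  have sesV := shortExact_of_epi η'
  -- i^! of Vj is zero
  have sesVsh := hiS.map_shortExact sesV
  haveI := sesVsh.mono_f
  have hiShV : IsZero (R.iShriek.obj Vj) :=
    IsZero.of_mono_eq_zero (R.iShriek.map κ) ((R.isZero_iShriek_jStar U).eq_of_tgt _ _)
  -- i^* of Vj is zero
  have sesVU := hiU.map_shortExact sesV
  haveI := sesVU.mono_f
  haveI : IsSplitMono (R.iUStar.map η') :=
    IsSplitMono.mk' ⟨R.adj₁.counit.app (R.iUStar.obj JU), R.adj₁.left_triangle_components JU⟩
  have hκ0 : R.iUStar.map κ = 0 :=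
    zero_of_comp_mono (R.iUStar.map η')
      (by rw [← Functor.map_comp, hκdef, kernel.condition, Functor.map_zero])
  have hiUV : IsZero (R.iUStar.obj Vj) := IsZero.of_mono_eq_zero _ hκ0
  -- j^* of κ is iso
  have sesVj := R.jUStar_exact.map_shortExact sesV
  haveI := sesVj.mono_f
  haveI := sesVj.epi_g
  have hjη'0 : R.jUStar.map η' = 0 := (R.isZero_jUStar_iStar _).eq_of_tgt _ _
  haveI : Epi (R.jUStar.map κ) := sesVj.exact.epi_f hjη'0
  haveI : IsIso (R.jUStar.map κ) := isIso_of_mono_of_epi _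
  -- i^! of η' is iso
  have hShκ0 : R.iShriek.map κ = 0 := hiShV.eq_of_src _ _
  haveI : Mono (R.iShriek.map η') := sesVsh.exact.mono_g hShκ0
  haveI := sesVsh.epi_g
  haveI : IsIso (R.iShriek.map η') := isIso_of_mono_of_epi _
  -- naturality of the unit at u
  have hnat : u ≫ η' = η ≫ R.iStar.map (R.iUStar.map u) := by
    have h := R.adj₁.unit.naturality u
    simp only [Functor.id_map, Functor.comp_map] at h
    exact h
  -- construct the correction δ̄
  set t : R.iStar.obj (R.iUStar.obj X) ⟶ R.iStar.obj (R.iUStar.obj JU) :=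
    R.iStar.map (R.iUStar.map u) with htdef
  set γ : R.iUStar.obj X ⟶ R.iShriek.obj JU :=
    (R.adj₂.homEquiv (R.iUStar.obj X) (R.iStar.obj (R.iUStar.obj JU))) t ≫
      inv (R.iShriek.map η') with hγdef
  set δ : R.iStar.obj (R.iUStar.obj X) ⟶ JU := (R.adj₂.homEquiv _ JU).symm γ with hδdef
  have hδη' : δ ≫ η' = t := by
    apply (R.adj₂.homEquiv (R.iUStar.obj X) (R.iStar.obj (R.iUStar.obj JU))).injective
    rw [Adjunction.homEquiv_naturality_right, hδdef, Equiv.apply_symm_apply, hγdef]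
    simp
  -- corrected map u'
  set u' : X ⟶ JU := u - η ≫ δ with hu'def
  have hu'η' : u' ≫ η' = 0 := by
    rw [hu'def, Preadditive.sub_comp, hnat, Category.assoc, hδη', sub_self]
  set φ : X ⟶ Vj := kernel.lift η' u' hu'η' with hφdef
  have hφκ : φ ≫ κ = u' := kernel.lift_ι η' u' hu'η'
  have hjuu' : R.jUStar.map u' = R.jUStar.map u := by
    rw [hu'def, Functor.map_sub, Functor.map_comp]
    have : R.jUStar.map η = 0 := (R.isZero_jUStar_iStar _).eq_of_tgt _ _
    rw [this, zero_comp, sub_zero]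
  -- the map into the second summand
  set v : X ⟶ R.iStar.obj S_A := η ≫ R.iStar.map f₁ with hvdef
  set V : B := Vj ⊞ R.iStar.obj S_A with hVdef
  set g : X ⟶ V := biprod.lift φ v with hgdef
  -- the comparison isos on components
  set αj : R.jUStar.obj V ⟶ U :=
    R.jUStar.map biprod.fst ≫ R.jUStar.map κ ≫ R.adj₄.counit.app U with hαjdef
  set αi : R.iUStar.obj V ⟶ S_A :=
    R.iUStar.map biprod.snd ≫ R.adj₁.counit.app S_A with hαidef
  have e1 : g ≫ (biprod.fst : V ⟶ Vj) = φ := biprod.lift_fst _ _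
  have e3 : g ≫ (biprod.snd : V ⟶ R.iStar.obj S_A) = v := biprod.lift_snd _ _
  have hαj : R.jUStar.map g ≫ αj = a' := by
    calc R.jUStar.map g ≫ αj
        = R.jUStar.map ((g ≫ biprod.fst) ≫ κ) ≫ R.adj₄.counit.app U := by
          rw [hαjdef]; simp only [Functor.map_comp, Category.assoc]
      _ = R.jUStar.map u' ≫ R.adj₄.counit.app U := by rw [e1, hφκ]
      _ = R.jUStar.map u ≫ R.adj₄.counit.app U := by rw [hjuu']
      _ = a' := hu_eps
  have hαi : R.iUStar.map g ≫ αi = f₁ := by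
    calc R.iUStar.map g ≫ αi
        = R.iUStar.map (g ≫ biprod.snd) ≫ R.adj₁.counit.app S_A := by
          rw [hαidef]; simp only [Functor.map_comp, Category.assoc]
      _ = (R.iUStar.map η ≫ R.iUStar.map (R.iStar.map f₁)) ≫ R.adj₁.counit.app S_A := by
          rw [e3, hvdef, Functor.map_comp]
      _ = R.iUStar.map η ≫ R.adj₁.counit.app (R.iUStar.obj X) ≫ f₁ := by
          have hnat2 : R.iUStar.map (R.iStar.map f₁) ≫ R.adj₁.counit.app S_A =
              R.adj₁.counit.app (R.iUStar.obj X) ≫ f₁ := R.adj₁.counit.naturality f₁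
          rw [Category.assoc, hnat2]
      _ = (R.iUStar.map η ≫ R.adj₁.counit.app (R.iUStar.obj X)) ≫ f₁ := by
          rw [Category.assoc]
      _ = f₁ := by
          rw [hηdef, R.adj₁.left_triangle_components X, Category.id_comp]
  -- iso-ness of αj
  have sesb1 := R.jUStar_exact.map_shortExact (shortExact_biprod_inr_fst Vj (R.iStar.obj S_A))
  haveI := sesb1.epi_g
  have hb1 : R.jUStar.map (biprod.inr : R.iStar.obj S_A ⟶ Vj ⊞ R.iStar.obj S_A) = 0 :=
    (R.isZero_jUStar_iStar S_A).eq_of_src _ _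
  haveI : Mono (R.jUStar.map (biprod.fst : Vj ⊞ R.iStar.obj S_A ⟶ Vj)) :=
    sesb1.exact.mono_g hb1
  haveI : IsIso (R.jUStar.map (biprod.fst : Vj ⊞ R.iStar.obj S_A ⟶ Vj)) :=
    isIso_of_mono_of_epi _
  haveI : IsIso R.adj₄.counit := R.adj₄.counit_isIso_of_R_fully_faithful
  haveI : IsIso αj := by rw [hαjdef]; infer_instance
  -- iso-ness of αi
  have sesb2 := hiU.map_shortExact (shortExact_biprod_inl_snd Vj (R.iStar.obj S_A))
  haveI := sesb2.epi_g
  have hb2 : R.iUStar.map (biprod.inl : Vj ⟶ Vj ⊞ R.iStar.obj S_A) = 0 :=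
    hiUV.eq_of_src _ _
  haveI : Mono (R.iUStar.map (biprod.snd : Vj ⊞ R.iStar.obj S_A ⟶ R.iStar.obj S_A)) :=
    sesb2.exact.mono_g hb2
  haveI : IsIso (R.iUStar.map (biprod.snd : Vj ⊞ R.iStar.obj S_A ⟶ R.iStar.obj S_A)) :=
    isIso_of_mono_of_epi _
  haveI : IsIso R.adj₁.counit := R.adj₁.counit_isIso_of_R_fully_faithful
  haveI : IsIso αi := by rw [hαidef]; infer_instance
  -- g is a mono
  haveI hjUg : Mono (R.jUStar.map g) := by
    haveI : Mono (R.jUStar.map g ≫ αj) := by rw [hαj]; exact se₂.mono_f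
    exact mono_of_mono (R.jUStar.map g) αj
  haveI hiUg : Mono (R.iUStar.map g) := by
    haveI : Mono (R.iUStar.map g ≫ αi) := by rw [hαi]; exact se₁.mono_f
    exact mono_of_mono (R.iUStar.map g) αi
  haveI : Mono g := by
    set k : kernel g ⟶ X := kernel.ι g with hkdef
    set p : X ⟶ cokernel k := cokernel.π k with hpdef
    have hfac : p ≫ cokernel.desc k g (kernel.condition g) = g := cokernel.π_desc _ _ _
    have sesk := shortExact_of_mono k
    have hjmono : Mono (R.jUStar.map p) := by
      haveI : Mono (R.jUStar.map p ≫ R.jUStar.map (cokernel.desc k g (kernel.condition g))) := by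
        rw [← Functor.map_comp, hfac]; exact hjUg
      exact mono_of_mono (R.jUStar.map p) (R.jUStar.map (cokernel.desc k g (kernel.condition g)))
    have himono : Mono (R.iUStar.map p) := by
      haveI : Mono (R.iUStar.map p ≫ R.iUStar.map (cokernel.desc k g (kernel.condition g))) := by
        rw [← Functor.map_comp, hfac]; exact hiUg
      exact mono_of_mono (R.iUStar.map p) (R.iUStar.map (cokernel.desc k g (kernel.condition g)))
    have seskj := R.jUStar_exact.map_shortExact sesk
    haveI := seskj.mono_f
    have hjk0 : R.jUStar.map k = 0 :=
      zero_of_comp_mono (R.jUStar.map p)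
        (by rw [← Functor.map_comp, hpdef, cokernel.condition, Functor.map_zero])
    have hjK : IsZero (R.jUStar.obj (kernel g)) := IsZero.of_mono_eq_zero _ hjk0
    have seski := hiU.map_shortExact sesk
    haveI := seski.mono_f
    have hik0 : R.iUStar.map k = 0 :=
      zero_of_comp_mono (R.iUStar.map p)
        (by rw [← Functor.map_comp, hpdef, cokernel.condition, Functor.map_zero])
    have hiK : IsZero (R.iUStar.obj (kernel g)) := IsZero.of_mono_eq_zero _ hik0
    have hK : IsZero (kernel g) := R.isZero_of_isZero_iUStar_jUStar hiK hjK
    exact Preadditive.mono_of_kernel_zero (hK.eq_of_src _ _)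
  -- the main short exact sequence
  have sesMain := shortExact_of_mono g
  have sesMainU := hiU.map_shortExact sesMain
  have sesMainJ := R.jUStar_exact.map_shortExact sesMain
  have hYi : Nonempty (R.iUStar.obj (cokernel g) ≅ C₁) :=
    coker_compare sesMainU se₁ (asIso αi) hαi
  have hYj : Nonempty (R.jUStar.obj (cokernel g) ≅ C₂) :=
    coker_compare sesMainJ se₂ (asIso αj) hαj
  exact ⟨V, cokernel g, g, cokernel.π g, cokernel.condition g, sesMain,
    ⟨asIso αi⟩, ⟨asIso αj⟩, hYi, hYj⟩

set_option maxHeartbeats 1000000 in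
lemma glue_step_res (R : Recollement A B C)
    (hiU : IsExactFunctor R.iUStar) (hiS : IsExactFunctor R.iShriek)
    {X : B} {F_A K₁ : A} {U' K₂ : C}
    {f₁ : K₁ ⟶ F_A} {g₁ : F_A ⟶ R.iShriek.obj X} {w₁ : f₁ ≫ g₁ = 0}
    (se₁ : (ShortComplex.mk f₁ g₁ w₁).ShortExact)
    {f₂ : K₂ ⟶ U'} {a'' : U' ⟶ R.jUStar.obj X} {w₂ : f₂ ≫ a'' = 0}
    (se₂ : (ShortComplex.mk f₂ a'' w₂).ShortExact) :
    ∃ (Y W : B) (f : Y ⟶ W) (g : W ⟶ X) (w : f ≫ g = 0),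
      (ShortComplex.mk f g w).ShortExact ∧
      Nonempty (R.iShriek.obj W ≅ F_A) ∧ Nonempty (R.jUStar.obj W ≅ U') ∧
      Nonempty (R.iShriek.obj Y ≅ K₁) ∧ Nonempty (R.jUStar.obj Y ≅ K₂) := by
  haveI := R.iStar_full
  haveI := R.iStar_faithful
  haveI := R.jShriek_full
  haveI := R.jShriek_faithful
  haveI := hiU.additive
  haveI := hiS.additive
  haveI := R.jUStar_exact.additive
  haveI := R.iStar_exact.additive
  haveI := R.jShriek_additive
  haveI := se₁.epi_g
  haveI := se₂.epi_g
  -- notation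
  set ε : R.iStar.obj (R.iShriek.obj X) ⟶ X := R.adj₂.counit.app X with hεdef
  haveI hεmono : Mono ε := R.mono_adj₂_counit_app X
  set JL : B := R.jShriek.obj U' with hJLdef
  set ε' : R.iStar.obj (R.iShriek.obj JL) ⟶ JL := R.adj₂.counit.app JL with hε'def
  haveI hε'mono : Mono ε' := R.mono_adj₂_counit_app JL
  set u : JL ⟶ X := (R.adj₃.homEquiv U' X).symm a'' with hudef
  have hu_unit : R.adj₃.unit.app U' ≫ R.jUStar.map u = a'' := by
    have h := R.adj₃.homEquiv_unit (X := U') (Y := X) (f := u)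
    rw [← h, hudef, Equiv.apply_symm_apply]
  -- cokernel piece
  set Vj : B := cokernel ε' with hVjdef
  set κ : JL ⟶ Vj := cokernel.π ε' with hκdef
  have sesV := shortExact_of_mono ε'
  -- i^* of Vj is zero
  have sesVU := hiU.map_shortExact sesV
  haveI := sesVU.epi_g
  haveI := sesVU.mono_f
  have hκU0 : R.iUStar.map κ = 0 := (R.isZero_iUStar_jShriek U').eq_of_src _ _
  have hiUV : IsZero (R.iUStar.obj Vj) := IsZero.of_epi_eq_zero _ hκU0
  -- i^! of Vj is zero
  have sesVsh := hiS.map_shortExact sesV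
  haveI := sesVsh.epi_g
  haveI : IsSplitEpi (R.iShriek.map ε') :=
    IsSplitEpi.mk' ⟨R.adj₂.unit.app (R.iShriek.obj JL), R.adj₂.right_triangle_components JL⟩
  have hκSh0 : R.iShriek.map κ = 0 :=
    zero_of_epi_comp (R.iShriek.map ε')
      (by rw [← Functor.map_comp, hκdef, cokernel.condition, Functor.map_zero])
  have hiShV : IsZero (R.iShriek.obj Vj) := IsZero.of_epi_eq_zero _ hκSh0
  -- j^* of κ is iso
  have sesVj := R.jUStar_exact.map_shortExact sesV
  haveI := sesVj.mono_f
  haveI := sesVj.epi_g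
  have hjε'0 : R.jUStar.map ε' = 0 := (R.isZero_jUStar_iStar _).eq_of_src _ _
  haveI : Mono (R.jUStar.map κ) := sesVj.exact.mono_g hjε'0
  haveI : IsIso (R.jUStar.map κ) := isIso_of_mono_of_epi _
  -- i^* of ε' is iso
  haveI : Epi (R.iUStar.map ε') := sesVU.exact.epi_f hκU0
  haveI : IsIso (R.iUStar.map ε') := isIso_of_mono_of_epi _
  -- counit naturality at u
  have hnat : ε' ≫ u = R.iStar.map (R.iShriek.map u) ≫ ε := by
    have h := R.adj₂.counit.naturality u
    simp only [Functor.id_map, Functor.comp_map] at h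
    exact h.symm
  -- the correction δ
  set t : R.iStar.obj (R.iShriek.obj JL) ⟶ R.iStar.obj (R.iShriek.obj X) :=
    R.iStar.map (R.iShriek.map u) with htdef
  set γ : R.iUStar.obj JL ⟶ R.iShriek.obj X :=
    inv (R.iUStar.map ε') ≫ (R.adj₁.homEquiv _ _).symm t with hγdef
  set δ : JL ⟶ R.iStar.obj (R.iShriek.obj X) := (R.adj₁.homEquiv JL (R.iShriek.obj X)) γ
    with hδdef
  have hδε' : ε' ≫ δ = t := by
    rw [hδdef, ← R.adj₁.homEquiv_naturality_left, hγdef, IsIso.hom_inv_id_assoc,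
      Equiv.apply_symm_apply]
  -- the corrected map u'
  set u' : JL ⟶ X := u - δ ≫ ε with hu'def
  have hε'u' : ε' ≫ u' = 0 := by
    rw [hu'def, Preadditive.comp_sub, hnat, ← Category.assoc, hδε', sub_self]
  set ψ : Vj ⟶ X := cokernel.desc ε' u' hε'u' with hψdef
  have hκψ : κ ≫ ψ = u' := cokernel.π_desc ε' u' hε'u'
  have hjuu' : R.jUStar.map u' = R.jUStar.map u := by
    rw [hu'def, Functor.map_sub, Functor.map_comp]
    have : R.jUStar.map δ = 0 := (R.isZero_jUStar_iStar _).eq_of_tgt _ _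
    rw [this, zero_comp, sub_zero]
  -- the map out of the second summand
  set v : R.iStar.obj F_A ⟶ X := R.iStar.map g₁ ≫ ε with hvdef
  set W : B := Vj ⊞ R.iStar.obj F_A with hWdef
  set h : W ⟶ X := biprod.desc ψ v with hhdef
  have e1 : (biprod.inl : Vj ⟶ W) ≫ h = ψ := biprod.inl_desc _ _
  have e3 : (biprod.inr : R.iStar.obj F_A ⟶ W) ≫ h = v := biprod.inr_desc _ _
  -- comparison maps
  set αj : U' ⟶ R.jUStar.obj W :=
    R.adj₃.unit.app U' ≫ R.jUStar.map κ ≫ R.jUStar.map biprod.inl with hαjdef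
  set αi : F_A ⟶ R.iShriek.obj W :=
    R.adj₂.unit.app F_A ≫ R.iShriek.map biprod.inr with hαidef
  have hαj : αj ≫ R.jUStar.map h = a'' := by
    calc αj ≫ R.jUStar.map h
        = R.adj₃.unit.app U' ≫ R.jUStar.map (κ ≫ biprod.inl ≫ h) := by
          rw [hαjdef]; simp only [Functor.map_comp, Category.assoc]
      _ = R.adj₃.unit.app U' ≫ R.jUStar.map u' := by rw [e1, hκψ]
      _ = R.adj₃.unit.app U' ≫ R.jUStar.map u := by rw [hjuu']
      _ = a'' := hu_unit
  have hαi : αi ≫ R.iShriek.map h = g₁ := by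
    calc αi ≫ R.iShriek.map h
        = R.adj₂.unit.app F_A ≫ R.iShriek.map (biprod.inr ≫ h) := by
          rw [hαidef]; simp only [Functor.map_comp, Category.assoc]
      _ = R.adj₂.unit.app F_A ≫ R.iShriek.map (R.iStar.map g₁) ≫ R.iShriek.map ε := by
          rw [e3, hvdef, Functor.map_comp]
      _ = g₁ ≫ R.adj₂.unit.app (R.iShriek.obj X) ≫ R.iShriek.map ε := by
          have hnat2 : R.adj₂.unit.app F_A ≫ R.iShriek.map (R.iStar.map g₁) =
              g₁ ≫ R.adj₂.unit.app (R.iShriek.obj X) := by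
            have h2 := R.adj₂.unit.naturality g₁
            simp only [Functor.id_map, Functor.comp_map] at h2
            exact h2.symm
          rw [← Category.assoc, hnat2, Category.assoc]
      _ = g₁ := by
          rw [hεdef, R.adj₂.right_triangle_components X, Category.comp_id]
  -- iso-ness of αj
  have sesb1 := R.jUStar_exact.map_shortExact (shortExact_biprod_inl_snd Vj (R.iStar.obj F_A))
  haveI := sesb1.mono_f
  have hb1 : R.jUStar.map (biprod.snd : Vj ⊞ R.iStar.obj F_A ⟶ R.iStar.obj F_A) = 0 :=
    (R.isZero_jUStar_iStar F_A).eq_of_tgt _ _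
  haveI : Epi (R.jUStar.map (biprod.inl : Vj ⟶ Vj ⊞ R.iStar.obj F_A)) :=
    sesb1.exact.epi_f hb1
  haveI : IsIso (R.jUStar.map (biprod.inl : Vj ⟶ Vj ⊞ R.iStar.obj F_A)) :=
    isIso_of_mono_of_epi _
  haveI : IsIso R.adj₃.unit := R.adj₃.unit_isIso_of_L_fully_faithful
  haveI : IsIso αj := by rw [hαjdef]; infer_instance
  -- iso-ness of αi
  have sesb2 := hiS.map_shortExact (shortExact_biprod_inr_fst Vj (R.iStar.obj F_A))
  haveI := sesb2.mono_f
  have hb2 : R.iShriek.map (biprod.fst : Vj ⊞ R.iStar.obj F_A ⟶ Vj) = 0 :=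
    hiShV.eq_of_tgt _ _
  haveI : Epi (R.iShriek.map (biprod.inr : R.iStar.obj F_A ⟶ Vj ⊞ R.iStar.obj F_A)) :=
    sesb2.exact.epi_f hb2
  haveI : IsIso (R.iShriek.map (biprod.inr : R.iStar.obj F_A ⟶ Vj ⊞ R.iStar.obj F_A)) :=
    isIso_of_mono_of_epi _
  haveI : IsIso R.adj₂.unit := R.adj₂.unit_isIso_of_L_fully_faithful
  haveI : IsIso αi := by rw [hαidef]; infer_instance
  -- h is an epi
  haveI hjUh : Epi (R.jUStar.map h) := by
    haveI : Epi (αj ≫ R.jUStar.map h) := by rw [hαj]; exact se₂.epi_g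
    exact epi_of_epi αj (R.jUStar.map h)
  haveI hiShh : Epi (R.iShriek.map h) := by
    haveI : Epi (αi ≫ R.iShriek.map h) := by rw [hαi]; exact se₁.epi_g
    exact epi_of_epi αi (R.iShriek.map h)
  haveI : Epi h := by
    set q : X ⟶ cokernel h := cokernel.π h with hqdef
    set kq : kernel q ⟶ X := kernel.ι q with hkqdef
    have hfac : kernel.lift q h (cokernel.condition h) ≫ kq = h := kernel.lift_ι _ _ _
    have sesq := shortExact_of_epi q
    have hjepi : Epi (R.jUStar.map kq) := by
      haveI : Epi (R.jUStar.map (kernel.lift q h (cokernel.condition h)) ≫ R.jUStar.map kq) := by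
        rw [← Functor.map_comp, hfac]; exact hjUh
      exact epi_of_epi (R.jUStar.map (kernel.lift q h (cokernel.condition h))) (R.jUStar.map kq)
    have hshepi : Epi (R.iShriek.map kq) := by
      haveI : Epi (R.iShriek.map (kernel.lift q h (cokernel.condition h)) ≫ R.iShriek.map kq) := by
        rw [← Functor.map_comp, hfac]; exact hiShh
      exact epi_of_epi (R.iShriek.map (kernel.lift q h (cokernel.condition h))) (R.iShriek.map kq)
    have sesqj := R.jUStar_exact.map_shortExact sesq
    haveI := sesqj.epi_g
    have hjq0 : R.jUStar.map q = 0 := by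
      haveI := hjepi
      exact zero_of_epi_comp (R.jUStar.map kq)
        (by rw [← Functor.map_comp, hkqdef, kernel.condition, Functor.map_zero])
    have hjQ : IsZero (R.jUStar.obj (cokernel h)) := IsZero.of_epi_eq_zero _ hjq0
    have sesqs := hiS.map_shortExact sesq
    haveI := sesqs.epi_g
    have hsq0 : R.iShriek.map q = 0 := by
      haveI := hshepi
      exact zero_of_epi_comp (R.iShriek.map kq)
        (by rw [← Functor.map_comp, hkqdef, kernel.condition, Functor.map_zero])
    have hsQ : IsZero (R.iShriek.obj (cokernel h)) := IsZero.of_epi_eq_zero _ hsq0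
    have hQ : IsZero (cokernel h) := R.isZero_of_isZero_iShriek_jUStar hsQ hjQ
    exact Preadditive.epi_of_cokernel_zero (hQ.eq_of_tgt _ _)
  -- the main short exact sequence
  have sesMain := shortExact_of_epi h
  have sesMainSh := hiS.map_shortExact sesMain
  have sesMainJ := R.jUStar_exact.map_shortExact sesMain
  have hYi : Nonempty (R.iShriek.obj (kernel h) ≅ K₁) :=
    ker_compare sesMainSh se₁ (asIso αi) hαi
  have hYj : Nonempty (R.jUStar.obj (kernel h) ≅ K₂) :=
    ker_compare sesMainJ se₂ (asIso αj) hαj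
  exact ⟨kernel h, W, kernel.ι h, h, kernel.condition h, sesMain,
    ⟨(asIso αi).symm⟩, ⟨(asIso αj).symm⟩, hYi, hYj⟩

end Glue

section Main

variable {A B C : Type u} [Category.{v} A] [Category.{v} B] [Category.{v} C]
  [Abelian A] [Abelian B] [Abelian C]

lemma cores_hard (R : Recollement A B C)
    (hiU : IsExactFunctor R.iUStar) (hiS : IsExactFunctor R.iShriek)
    {T₁ : Set A} {T₂ : Set C}
    (hT₁ : ∀ ⦃P P' : A⦄, P ∈ T₁ → (P ≅ P') → P' ∈ T₁)
    (hT₂ : ∀ ⦃P P' : C⦄, P ∈ T₂ → (P ≅ P') → P' ∈ T₂) :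
    ∀ (m : ℕ) (X : B), R.iUStar.obj X ∈ CoresClass T₁ m → R.jUStar.obj X ∈ CoresClass T₂ m →
      X ∈ CoresClass {X : B | R.iUStar.obj X ∈ T₁ ∧ R.jUStar.obj X ∈ T₂} m := by
  intro m
  induction m with
  | zero =>
    rintro X ⟨Z₁, hZ₁, ⟨e₁⟩⟩ ⟨Z₂, hZ₂, ⟨e₂⟩⟩
    exact ⟨X, ⟨hT₁ hZ₁ e₁.symm, hT₂ hZ₂ e₂.symm⟩, ⟨Iso.refl X⟩⟩
  | succ m ih =>
    rintro X ⟨S_A, C₁, f₁, g₁, w₁, se₁, hS_A, hC₁⟩ ⟨U, C₂, a', g₂, w₂, se₂, hU, hC₂⟩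
    obtain ⟨V, Y, f, g, w, se, ⟨eVi⟩, ⟨eVj⟩, ⟨eYi⟩, ⟨eYj⟩⟩ := glue_step_cores R hiU hiS se₁ se₂
    refine ⟨V, Y, f, g, w, se, ⟨hT₁ hS_A eVi.symm, hT₂ hU eVj.symm⟩, ?_⟩
    exact ih Y (coresClass_iso hC₁ eYi.symm) (coresClass_iso hC₂ eYj.symm)

lemma res_hard (R : Recollement A B C)
    (hiU : IsExactFunctor R.iUStar) (hiS : IsExactFunctor R.iShriek)
    {F₁ : Set A} {F₂ : Set C}
    (hF₁ : ∀ ⦃P P' : A⦄, P ∈ F₁ → (P ≅ P') → P' ∈ F₁)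
    (hF₂ : ∀ ⦃P P' : C⦄, P ∈ F₂ → (P ≅ P') → P' ∈ F₂) :
    ∀ (m : ℕ) (X : B), R.iShriek.obj X ∈ ResClass F₁ m → R.jUStar.obj X ∈ ResClass F₂ m →
      X ∈ ResClass {X : B | R.iShriek.obj X ∈ F₁ ∧ R.jUStar.obj X ∈ F₂} m := by
  intro m
  induction m with
  | zero =>
    rintro X ⟨Z₁, hZ₁, ⟨e₁⟩⟩ ⟨Z₂, hZ₂, ⟨e₂⟩⟩
    exact ⟨X, ⟨hF₁ hZ₁ e₁, hF₂ hZ₂ e₂⟩, ⟨Iso.refl X⟩⟩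
  | succ m ih =>
    rintro X ⟨K₁, F_A, f₁, g₁, w₁, se₁, hF_A, hK₁⟩ ⟨K₂, U', f₂, a'', w₂, se₂, hU', hK₂⟩
    obtain ⟨Y, W, f, g, w, se, ⟨eWi⟩, ⟨eWj⟩, ⟨eYi⟩, ⟨eYj⟩⟩ := glue_step_res R hiU hiS se₁ se₂
    refine ⟨Y, W, f, g, w, se, ⟨hF₁ hF_A eWi.symm, hF₂ hU' eWj.symm⟩, ?_⟩
    exact ih Y (resClass_iso hK₁ eYi.symm) (resClass_iso hK₂ eYj.symm)

lemma cores_easy (R : Recollement A B C)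
    (hiU : IsExactFunctor R.iUStar) {T₁ : Set A} {T₂ : Set C} :
    ∀ (m : ℕ) (X : B),
      X ∈ CoresClass {X : B | R.iUStar.obj X ∈ T₁ ∧ R.jUStar.obj X ∈ T₂} m →
      R.iUStar.obj X ∈ CoresClass T₁ m ∧ R.jUStar.obj X ∈ CoresClass T₂ m := by
  intro m
  induction m with
  | zero =>
    rintro X ⟨Z, ⟨hZi, hZj⟩, ⟨e⟩⟩
    exact ⟨⟨R.iUStar.obj Z, hZi, ⟨R.iUStar.mapIso e⟩⟩, ⟨R.jUStar.obj Z, hZj, ⟨R.jUStar.mapIso e⟩⟩⟩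
  | succ m ih =>
    rintro X ⟨V, K, f, g, w, se, ⟨hVi, hVj⟩, hK⟩
    exact ⟨⟨R.iUStar.obj V, R.iUStar.obj K, R.iUStar.map f, R.iUStar.map g, _,
        hiU.map_shortExact se, hVi, (ih K hK).1⟩,
      ⟨R.jUStar.obj V, R.jUStar.obj K, R.jUStar.map f, R.jUStar.map g, _,
        R.jUStar_exact.map_shortExact se, hVj, (ih K hK).2⟩⟩

lemma res_easy (R : Recollement A B C)
    (hiS : IsExactFunctor R.iShriek) {F₁ : Set A} {F₂ : Set C} :
    ∀ (m : ℕ) (X : B),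
      X ∈ ResClass {X : B | R.iShriek.obj X ∈ F₁ ∧ R.jUStar.obj X ∈ F₂} m →
      R.iShriek.obj X ∈ ResClass F₁ m ∧ R.jUStar.obj X ∈ ResClass F₂ m := by
  intro m
  induction m with
  | zero =>
    rintro X ⟨Z, ⟨hZi, hZj⟩, ⟨e⟩⟩
    exact ⟨⟨R.iShriek.obj Z, hZi, ⟨R.iShriek.mapIso e⟩⟩, ⟨R.jUStar.obj Z, hZj, ⟨R.jUStar.mapIso e⟩⟩⟩
  | succ m ih =>
    rintro X ⟨K, V, f, g, w, se, ⟨hVi, hVj⟩, hK⟩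
    exact ⟨⟨R.iShriek.obj K, R.iShriek.obj V, R.iShriek.map f, R.iShriek.map g, _,
        hiS.map_shortExact se, hVi, (ih K hK).1⟩,
      ⟨R.jUStar.obj K, R.jUStar.obj V, R.jUStar.map f, R.jUStar.map g, _,
        R.jUStar_exact.map_shortExact se, hVj, (ih K hK).2⟩⟩

end Main

variable {A B C : Type u} [Category.{v} A] [Category.{v} B] [Category.{v} C]
  [Abelian A] [Abelian B] [Abelian C]

/-- (co)resolution classes of the glued pair are detected componentwise. -/
theorem glued_nCotorsionPair_resClasses
    [EnoughProjectives A] [EnoughInjectives A] [EnoughProjectives B] [EnoughInjectives B]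
    [EnoughProjectives C] [EnoughInjectives C]
    (R : Recollement A B C)
    (hiU : IsExactFunctor R.iUStar) (hiS : IsExactFunctor R.iShriek)
    (n : ℕ) (hn : 1 ≤ n) (T₁ F₁ : Set A) (T₂ F₂ : Set C)
    (h₁ : IsNCotorsionPair n T₁ F₁) (h₂ : IsNCotorsionPair n T₂ F₂) :
    CoresClass {X : B | R.iUStar.obj X ∈ T₁ ∧ R.jUStar.obj X ∈ T₂} (n - 1) =
      {X : B | R.iUStar.obj X ∈ CoresClass T₁ (n - 1) ∧
        R.jUStar.obj X ∈ CoresClass T₂ (n - 1)} ∧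
    ResClass {X : B | R.iShriek.obj X ∈ F₁ ∧ R.jUStar.obj X ∈ F₂} (n - 1) =
      {X : B | R.iShriek.obj X ∈ ResClass F₁ (n - 1) ∧
        R.jUStar.obj X ∈ ResClass F₂ (n - 1)} := by
  have hT₁ : ∀ ⦃P P' : A⦄, P ∈ T₁ → (P ≅ P') → P' ∈ T₁ :=
    fun P P' hP e => h₁.1.closed_summands hP ⟨e.inv, e.hom, e.inv_hom_id⟩
  have hT₂ : ∀ ⦃P P' : C⦄, P ∈ T₂ → (P ≅ P') → P' ∈ T₂ :=
    fun P P' hP e => h₂.1.closed_summands hP ⟨e.inv, e.hom, e.inv_hom_id⟩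
  have hF₁ : ∀ ⦃P P' : A⦄, P ∈ F₁ → (P ≅ P') → P' ∈ F₁ :=
    fun P P' hP e => h₁.2.closed_summands hP ⟨e.inv, e.hom, e.inv_hom_id⟩
  have hF₂ : ∀ ⦃P P' : C⦄, P ∈ F₂ → (P ≅ P') → P' ∈ F₂ :=
    fun P P' hP e => h₂.2.closed_summands hP ⟨e.inv, e.hom, e.inv_hom_id⟩
  constructor
  · apply Set.eq_of_subset_of_subset
    · intro X hX
      exact cores_easy R hiU (n - 1) X hX
    · rintro X ⟨hx1, hx2⟩
      exact cores_hard R hiU hiS hT₁ hT₂ (n - 1) X hx1 hx2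
  · apply Set.eq_of_subset_of_subset
    · intro X hX
      exact res_easy R hiS (n - 1) X hX
    · rintro X ⟨hx1, hx2⟩
      exact res_hard R hiU hiS hF₁ hF₂ (n - 1) X hx1 hx2

end PaperRecollement
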